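/- Define B^{(k,n)}(μ_0, μ_1, …, μ_k) = Σ_{0 ≤ q_1 < q_2 < ⋯ < q_k ≤ n-1} (μ_1/μ_0)^{q_k} (μ_2/μ_1)^{q_{k-1}} ⋯ (μ_k/μ_{k-1})^{q_1} / (μ_0 μ_1 ⋯ μ_{k-1}) for nonzero complex numbers μ_i. If μ_0 ≠ μ_1, then B^{(k+1,n)}(μ_0, μ_1, …, μ_{k+1}) = (B^{(k,n)}(μ_0, μ_2, …, μ_{k+1}) − (μ_1/μ_0)^n · B^{(k,n)}(μ_1, μ_2, …, μ_{k+1})) / (μ_0 − μ_1). -/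

import Mathlib

open Finset in
/-- The coefficient `B^{(k,n)}(μ_0,…,μ_k)`, a sum over strictly increasing
`k`-tuples `q_1 < ⋯ < q_k` in `{0,…,n-1}` of
`(μ_1/μ_0)^{q_k} (μ_2/μ_1)^{q_{k-1}} ⋯ (μ_k/μ_{k-1})^{q_1} / (μ_0 ⋯ μ_{k-1})`. -/
noncomputable def Bcoef (k n : ℕ) (μ : Fin (k + 1) → ℂ) : ℂ :=
  ∑ q ∈ Finset.univ.filter (fun q : Fin k → Fin n => StrictMono q),
    (∏ j : Fin k, (μ j.succ / μ j.castSucc) ^ ((q (Fin.rev j) : ℕ))) /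
      ∏ j : Fin k, μ j.castSucc


lemma Bcoef_zero (n : ℕ) (μ : Fin 1 → ℂ) : Bcoef 0 n μ = 1 := by
  have : ∀ q : Fin 0 → Fin n, StrictMono q := fun q a => a.elim0
  simp [Bcoef, Finset.filter_true_of_mem (fun q _ => this q)]

lemma Bcoef_n_zero (k : ℕ) (μ : Fin (k + 2) → ℂ) : Bcoef (k+1) 0 μ = 0 := by
  simp [Bcoef]

open Finset in
lemma Bcoef_succ_n (k n : ℕ) (μ : Fin (k + 2) → ℂ) :
    Bcoef (k+1) (n+1) μ
      = Bcoef (k+1) n μ + ((μ 1 / μ 0) ^ n / μ 0) * Bcoef k n (Fin.tail μ) := by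
  classical
  unfold Bcoef
  rw [← Finset.sum_filter_add_sum_filter_not
    (Finset.univ.filter (fun q : Fin (k+1) → Fin (n+1) => StrictMono q))
    (fun q => (q (Fin.last k) : ℕ) < n)]
  congr 1
  · -- part 1
    refine Finset.sum_bij'
      (i := fun q hq => fun j : Fin (k+1) => (⟨(q j : ℕ), ?_⟩ : Fin n))
      (j := fun q' _ => fun j => Fin.castLE (Nat.le_succ n) (q' j))
      ?_ ?_ ?_ ?_ ?_
    · simp only [Finset.mem_filter, Finset.mem_univ, true_and] at hq
      exact lt_of_le_of_lt (hq.1.monotone (Fin.le_last j)) hq.2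
    · intro q hq
      simp only [Finset.mem_filter, Finset.mem_univ, true_and] at hq ⊢
      intro a b hab
      exact Fin.mk_lt_mk.mpr (hq.1 hab)
    · intro q' hq'
      simp only [Finset.mem_filter, Finset.mem_univ, true_and] at hq' ⊢
      refine ⟨fun a b hab => ?_, ?_⟩
      · simp only [Fin.lt_def, Fin.coe_castLE]
        exact hq' hab
      · simp only [Fin.coe_castLE]
        exact (q' (Fin.last k)).isLt
    · intro q hq; funext j; exact Fin.ext (by simp)
    · intro q' hq'; funext j; exact Fin.ext (by simp)
    · intro q hq
      congr 1
  · -- part 2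
    have key : ∀ q' : Fin k → Fin n, StrictMono q' →
        StrictMono (Fin.snoc (fun i => (q' i).castSucc) (Fin.last n) : Fin (k+1) → Fin (n+1)) := by
      intro q' hq' a b hab
      rcases Fin.eq_castSucc_or_eq_last b with ⟨b', rfl⟩ | rfl
      · rcases Fin.eq_castSucc_or_eq_last a with ⟨a', rfl⟩ | rfl
        · simp only [Fin.snoc_castSucc]
          exact Fin.castSucc_lt_castSucc_iff.mpr (hq' (Fin.castSucc_lt_castSucc_iff.mp hab))
        · exact absurd (lt_of_lt_of_le hab (Fin.le_last _)) (lt_irrefl _)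
      · rcases Fin.eq_castSucc_or_eq_last a with ⟨a', rfl⟩ | rfl
        · simp only [Fin.snoc_castSucc, Fin.snoc_last]
          exact Fin.castSucc_lt_last _
        · exact absurd hab (lt_irrefl _)
    rw [Finset.mul_sum]
    refine Finset.sum_bij'
      (i := fun q hq => fun i : Fin k => (⟨(q i.castSucc : ℕ), ?_⟩ : Fin n))
      (j := fun q' _ => Fin.snoc (fun i => (q' i).castSucc) (Fin.last n))
      ?_ ?_ ?_ ?_ ?_
    · simp only [Finset.mem_filter, Finset.mem_univ, true_and] at hq
      have h1 : (q i.castSucc : ℕ) < (q (Fin.last k) : ℕ) :=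
        hq.1 (Fin.castSucc_lt_last i)
      have h2 := (q (Fin.last k)).isLt
      omega
    · intro q hq
      simp only [Finset.mem_filter, Finset.mem_univ, true_and] at hq ⊢
      intro a b hab
      exact Fin.mk_lt_mk.mpr (hq.1 (Fin.castSucc_lt_castSucc_iff.mpr hab))
    · intro q' hq'
      simp only [Finset.mem_filter, Finset.mem_univ, true_and] at hq' ⊢
      exact ⟨key q' hq', by simp⟩
    · intro q hq
      simp only [Finset.mem_filter, Finset.mem_univ, true_and] at hq
      have hlast : q (Fin.last k) = Fin.last n := by
        have := (q (Fin.last k)).isLt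
        exact Fin.ext (by simp only [Fin.val_last]; omega)
      funext a
      rcases Fin.eq_castSucc_or_eq_last a with ⟨a', rfl⟩ | rfl
      · simp only [Fin.snoc_castSucc]
        exact Fin.ext (by simp)
      · simpa only [Fin.snoc_last] using hlast.symm
    · intro q' hq'
      funext a
      exact Fin.ext (by simp)
    · intro q hq
      simp only [Finset.mem_filter, Finset.mem_univ, true_and] at hq
      have hlast : (q (Fin.last k) : ℕ) = n := by
        have := (q (Fin.last k)).isLt
        omega
      rw [Fin.prod_univ_succ (fun j : Fin (k+1) =>
            (μ j.succ / μ j.castSucc) ^ ((q (Fin.rev j) : ℕ))),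
          Fin.prod_univ_succ (fun j : Fin (k+1) => μ j.castSucc)]
      have e1 : Fin.rev (0 : Fin (k+1)) = Fin.last k := by
        simp [Fin.rev_zero]
      have e2 : ∀ i : Fin k, Fin.rev i.succ = (Fin.rev i).castSucc :=
        fun i => Fin.rev_succ i
      rw [e1]
      simp only [hlast]
      have enum : ∀ i : Fin k,
          (μ i.succ.succ / μ i.succ.castSucc) ^ ((q (Fin.rev i.succ) : ℕ))
            = (Fin.tail μ i.succ / Fin.tail μ i.castSucc)
                ^ ((q ((Fin.rev i).castSucc) : ℕ)) := by
        intro i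
        rw [e2 i]
        simp [Fin.tail]
      have eden : ∀ i : Fin k, μ i.succ.castSucc = Fin.tail μ i.castSucc := by
        intro i
        simp [Fin.tail]
      simp only [enum]
      simp only [eden]
      rw [div_mul_div_comm]
      congr 2

lemma Bcoef_mul (k n : ℕ) (μ : Fin (k + 2) → ℂ) (h0 : μ 0 ≠ 0) (h1 : μ 1 ≠ 0) :
    Bcoef (k + 1) n μ * (μ 0 - μ 1) =
      Bcoef k n (Fin.cons (μ 0) fun j : Fin k => μ j.succ.succ)
        - (μ 1 / μ 0) ^ n * Bcoef k n (Fin.tail μ) := by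
  induction n with
  | zero =>
    cases k with
    | zero =>
      rw [Bcoef_n_zero, Bcoef_zero, Bcoef_zero]
      ring
    | succ k' =>
      rw [Bcoef_n_zero, Bcoef_n_zero, Bcoef_n_zero]
      ring
  | succ n ih =>
    cases k with
    | zero =>
      rw [Bcoef_succ_n 0 n μ, add_mul, ih]
      simp only [Bcoef_zero]
      simp only [div_pow]
      field_simp
      ring
    | succ k' =>
      rw [Bcoef_succ_n (k'+1) n μ]
      rw [Bcoef_succ_n k' n (Fin.cons (μ 0) fun j : Fin (k'+1) => μ j.succ.succ)]
      rw [Bcoef_succ_n k' n (Fin.tail μ)]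
      have hc0 : (Fin.cons (μ 0) fun j : Fin (k'+1) => μ j.succ.succ : Fin (k'+2) → ℂ) 0 = μ 0 := by
        simp
      have hc1 : (Fin.cons (μ 0) fun j : Fin (k'+1) => μ j.succ.succ : Fin (k'+2) → ℂ) 1 = μ 2 := by
        show (fun j : Fin (k'+1) => μ j.succ.succ) 0 = μ 2
        norm_num [Fin.succ_zero_eq_one]
      have hct : Fin.tail (Fin.cons (μ 0) fun j : Fin (k'+1) => μ j.succ.succ : Fin (k'+2) → ℂ)
          = fun j : Fin (k'+1) => μ j.succ.succ := Fin.tail_cons _ _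
      have ht0 : Fin.tail μ 0 = μ 1 := by simp [Fin.tail, Fin.succ_zero_eq_one]
      have ht1 : Fin.tail μ 1 = μ 2 := by
        show μ (1:Fin (k'+2)).succ = μ 2
        norm_num [Fin.succ_one_eq_two]
      have htt : Fin.tail (Fin.tail μ) = fun j : Fin (k'+1) => μ j.succ.succ :=
        funext fun j => rfl
      rw [hc0, hc1, hct, ht0, ht1, htt]
      rw [add_mul, ih]
      set B0 := Bcoef (k'+1) n (Fin.cons (μ 0) fun j : Fin (k'+1) => μ j.succ.succ)
      set T := Bcoef (k'+1) n (Fin.tail μ)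
      set C := Bcoef k' n (fun j : Fin (k'+1) => μ j.succ.succ)
      have e1 : (μ 2 / μ 0) ^ n / μ 0 = (μ 1 / μ 0) ^ (n+1) * ((μ 2 / μ 1) ^ n / μ 1) := by
        simp only [div_pow]
        field_simp
        ring
      have e2 : -((μ 1 / μ 0) ^ n) + (μ 1 / μ 0) ^ n / μ 0 * (μ 0 - μ 1)
          = -((μ 1 / μ 0) ^ (n+1)) := by
        simp only [div_pow]
        field_simp
        ring
      rw [e1]
      linear_combination T * e2

theorem stmt4 (k n : ℕ) (μ : Fin (k + 2) → ℂ) (hμ : ∀ j, μ j ≠ 0)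
    (h01 : μ 0 ≠ μ 1) :
    Bcoef (k + 1) n μ =
      (Bcoef k n (Fin.cons (μ 0) fun j : Fin k => μ j.succ.succ)
        - (μ 1 / μ 0) ^ n * Bcoef k n (Fin.tail μ)) / (μ 0 - μ 1) := by
  rw [eq_div_iff (sub_ne_zero.mpr h01)]
  exact Bcoef_mul k n μ (hμ 0) (hμ 1)
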